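/- Variance of the RS+FD[GRR] estimator (Theorem 'variance_grr'): let d ≥ 1 and c ≥ 2 be integers, p, q ∈ [0,1] with p ≠ q and q = (1−p)/(c−1), let n be a positive integer, let 0 ≤ f ≤ 1, and set γ = (1/d)·(q + f·(p−q) + (d−1)/c) (the marginal probability that a user reports v when each user independently holds v with probability f under the RS+FD[GRR] mechanism). If N is the sum of n i.i.d. Bernoulli(γ) indicator random variables, then the estimator f̂ = (N·d·c − n·(d−1+q·c))/(n·c·(p−q)) has variance Var(f̂) = d²·γ·(1−γ)/(n·(p−q)²). -/

import Mathlib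

open MeasureTheory ProbabilityTheory

/-- Variance of the RS+FD[GRR] estimator (Theorem `variance_grr`). -/
theorem variance_grr
    {Ω : Type*} [MeasureSpace Ω] [IsProbabilityMeasure (ℙ : Measure Ω)]
    (d c : ℕ) (hd : 1 ≤ d) (hc : 2 ≤ c)
    (p q : ℝ) (hp : 0 ≤ p ∧ p ≤ 1) (hq : 0 ≤ q ∧ q ≤ 1) (hpq : p ≠ q)
    (hqdef : q = (1 - p) / ((c : ℝ) - 1))
    (n : ℕ) (hn : 0 < n)
    (f : ℝ) (hf0 : 0 ≤ f) (hf1 : f ≤ 1)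
    (γ : ℝ) (hγ : γ = (1 / (d : ℝ)) * (q + f * (p - q) + ((d : ℝ) - 1) / (c : ℝ)))
    (X : Fin n → Ω → Bool)
    (hmeas : ∀ i, Measurable (X i))
    (hindep : iIndepFun X ℙ)
    (hbern : ∀ i, ℙ {ω | X i ω = true} = ENNReal.ofReal γ) :
    variance (fun ω =>
        ((∑ i, if X i ω then (1 : ℝ) else 0) * (d : ℝ) * (c : ℝ)
          - (n : ℝ) * ((d : ℝ) - 1 + q * (c : ℝ)))
          / ((n : ℝ) * (c : ℝ) * (p - q))) ℙ
      = (d : ℝ) ^ 2 * γ * (1 - γ) / ((n : ℝ) * (p - q) ^ 2) := by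
  have hd1 : (1 : ℝ) ≤ (d : ℝ) := by exact_mod_cast hd
  have hc2 : (2 : ℝ) ≤ (c : ℝ) := by exact_mod_cast hc
  have hn0 : (0 : ℝ) < (n : ℝ) := by exact_mod_cast hn
  have hd0 : (0 : ℝ) < (d : ℝ) := by linarith
  have hc0 : (0 : ℝ) < (c : ℝ) := by linarith
  have hpq' : p - q ≠ 0 := sub_ne_zero.mpr hpq
  -- γ bounds
  have hA0 : 0 ≤ q + f * (p - q) := by
    nlinarith [mul_nonneg (sub_nonneg.2 hf1) hq.1, mul_nonneg hf0 hp.1]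
  have hA1 : q + f * (p - q) ≤ 1 := by
    nlinarith [mul_nonneg (sub_nonneg.2 hf1) (sub_nonneg.2 hq.2),
      mul_nonneg hf0 (sub_nonneg.2 hp.2)]
  have hB0 : 0 ≤ ((d : ℝ) - 1) / (c : ℝ) := div_nonneg (by linarith) (le_of_lt hc0)
  have hB1 : ((d : ℝ) - 1) / (c : ℝ) ≤ (d : ℝ) - 1 :=
    div_le_self (by linarith) (by linarith)
  have hγ0 : 0 ≤ γ := by
    rw [hγ]; exact mul_nonneg (by positivity) (by linarith)
  have hγ1 : γ ≤ 1 := by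
    rw [hγ]
    have : q + f * (p - q) + ((d : ℝ) - 1) / (c : ℝ) ≤ (d : ℝ) := by linarith
    calc 1 / (d : ℝ) * (q + f * (p - q) + ((d : ℝ) - 1) / (c : ℝ))
        ≤ 1 / (d : ℝ) * (d : ℝ) := by
          exact mul_le_mul_of_nonneg_left this (by positivity)
      _ = 1 := by field_simp
  -- the indicator random variables
  set Y : Fin n → Ω → ℝ := fun i ω => if X i ω then (1 : ℝ) else 0 with hY
  have hYmeas : ∀ i, Measurable (Y i) := fun i =>
    (Measurable.of_discrete (f := fun b : Bool => if b then (1 : ℝ) else 0)).comp (hmeas i)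
  have hYmem : ∀ i, MemLp (Y i) 2 ℙ := by
    intro i
    apply memLp_of_bounded (a := 0) (b := 1) _ (hYmeas i).aestronglyMeasurable
    filter_upwards with ω
    by_cases h : X i ω <;> simp [hY, h]
  have hYint : ∀ i, ∫ ω, Y i ω = γ := by
    intro i
    have hset : MeasurableSet {ω | X i ω = true} := (hmeas i) (MeasurableSet.singleton true)
    have heq : Y i = Set.indicator {ω | X i ω = true} (fun _ => (1 : ℝ)) := by
      funext ω
      by_cases h : X i ω <;> simp [hY, Set.indicator_apply, h]
    rw [heq, integral_indicator_const (1 : ℝ) hset, measureReal_def, hbern i, smul_eq_mul, mul_one,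
      ENNReal.toReal_ofReal hγ0]
  have hYsq : ∀ i, (Y i) ^ 2 = Y i := by
    intro i
    funext ω
    by_cases h : X i ω <;> simp [hY, h]
  have hYvar : ∀ i, variance (Y i) ℙ = γ * (1 - γ) := by
    intro i
    rw [variance_eq_sub (hYmem i), hYsq i, hYint i]
    ring
  -- independence of the Y's
  have hYindep : iIndepFun Y ℙ :=
    hindep.comp (fun _ b => if b then (1 : ℝ) else 0)
      (fun _ => Measurable.of_discrete)
  -- variance of the sum
  have hsum : variance (∑ i, Y i) ℙ = (n : ℝ) * (γ * (1 - γ)) := by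
    rw [IndepFun.variance_sum (fun i _ => hYmem i)
      (fun i _ j _ hij => hYindep.indepFun hij)]
    simp [hYvar, Finset.sum_const, Finset.card_univ]
  -- rewrite the estimator as an affine function of the sum
  set a : ℝ := (d : ℝ) * (c : ℝ) / ((n : ℝ) * (c : ℝ) * (p - q)) with ha
  set b : ℝ := -((n : ℝ) * ((d : ℝ) - 1 + q * (c : ℝ))) / ((n : ℝ) * (c : ℝ) * (p - q)) with hb
  have hfun : (fun ω =>
        ((∑ i, if X i ω then (1 : ℝ) else 0) * (d : ℝ) * (c : ℝ)
          - (n : ℝ) * ((d : ℝ) - 1 + q * (c : ℝ)))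
          / ((n : ℝ) * (c : ℝ) * (p - q)))
      = fun ω => a * (∑ i, Y i) ω + b := by
    funext ω
    simp only [ha, hb, Finset.sum_apply, hY]
    ring
  rw [hfun]
  clear_value a b
  -- variance of affine transform
  have hSmem : MemLp (∑ i, Y i) 2 ℙ := memLp_finset_sum' _ (fun i _ => hYmem i)
  have haS : MemLp (fun ω => a * (∑ i, Y i) ω) 2 ℙ := by
    simpa using hSmem.const_mul a
  have hvar_add : variance (fun ω => a * (∑ i, Y i) ω + b) ℙ
      = variance (fun ω => a * (∑ i, Y i) ω) ℙ := by
    have hrfl : (fun ω => a * (∑ i, Y i) ω + b)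
        = (((fun ω => a * (∑ i, Y i) ω) + fun _ => b : Ω → ℝ)) := rfl
    rw [hrfl, variance_eq_integral (haS.add (memLp_const b)).aemeasurable, variance_eq_integral haS.aemeasurable]
    have hEb : ∫ ω, (((fun ω => a * (∑ i, Y i) ω) + fun _ => b : Ω → ℝ)) ω
        = (∫ ω, a * (∑ i, Y i) ω) + b := by
      simp only [Pi.add_apply]
      rw [integral_add (haS.integrable one_le_two) (integrable_const b)]
      simp
    rw [hEb]
    congr 1
    funext ω
    simp only [Pi.pow_apply, Pi.sub_apply, Pi.add_apply]
    ring
  rw [hvar_add, variance_const_mul, hsum]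
  rw [ha]
  field_simp
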